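/- Let \(v:\mathbb{R}^d\to[0,\infty)\) be bounded, measurable, compactly supported and not almost-everywhere zero, with \(d\ge 3\). Then the scattering energy satisfies the strict inequality \(b(v) < \int_{\mathbb{R}^d} v(x)\,dx\). -/

import Mathlib

open MeasureTheory Filter

/-- The scattering energy functional `φ ↦ ∫ (2|∇φ|² + v|1-φ|²)`. -/
noncomputable def scatteringEnergy (d : ℕ) (v : EuclideanSpace ℝ (Fin d) → ℝ)
    (φ : EuclideanSpace ℝ (Fin d) → ℝ) : ℝ :=
  ∫ x, (2 * ‖gradient φ x‖ ^ 2 + v x * (1 - φ x) ^ 2)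

/-- The zero-scattering energy `b(v)`. -/
noncomputable def scatteringB (d : ℕ) (v : EuclideanSpace ℝ (Fin d) → ℝ) : ℝ :=
  sInf { e : ℝ | ∃ φ : EuclideanSpace ℝ (Fin d) → ℝ, Differentiable ℝ φ ∧
    Tendsto φ (cocompact _) (nhds 0) ∧
    Integrable (fun x => ‖gradient φ x‖ ^ 2) ∧
    e = scatteringEnergy d v φ }

/-- For `d ≥ 3` and `v` nonnegative, bounded, measurable, compactly supported and not
a.e. zero, the scattering energy is strictly smaller than `∫ v`. -/
theorem scatteringB_lt_integral (d : ℕ) (hd : 3 ≤ d)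
    (v : EuclideanSpace ℝ (Fin d) → ℝ) (hv_nonneg : ∀ x, 0 ≤ v x)
    (hv_meas : Measurable v) (hv_bdd : ∃ C, ∀ x, v x ≤ C)
    (hv_supp : HasCompactSupport v)
    (hv_ne : ¬ (v =ᵐ[volume] (fun _ => (0 : ℝ)))) :
    scatteringB d v < ∫ x, v x := by
  classical
  -- v is integrable
  obtain ⟨C, hC⟩ := hv_bdd
  have hv_int : Integrable v := by
    have hKmeas : MeasurableSet (tsupport v) := (isClosed_tsupport v).measurableSet
    have hind : Integrable ((tsupport v).indicator fun _ => C) := by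
      rw [integrable_indicator_iff hKmeas]
      exact integrableOn_const hv_supp.isCompact.measure_lt_top.ne
    refine hind.mono' hv_meas.aestronglyMeasurable (Eventually.of_forall fun x => ?_)
    by_cases hx : x ∈ tsupport v
    · simp only [Set.indicator_of_mem hx]
      rw [Real.norm_eq_abs, abs_of_nonneg (hv_nonneg x)]
      exact hC x
    · rw [image_eq_zero_of_notMem_tsupport hx, Set.indicator_of_notMem hx]
      simp
  -- ∫ v > 0
  have hA0 : 0 < ∫ x, v x := by
    rw [integral_pos_iff_support_of_nonneg hv_nonneg hv_int]
    by_contra h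
    push_neg at h
    apply hv_ne
    have : volume (Function.support v) = 0 := le_antisymm h bot_le
    refine (ae_iff).2 ?_
    simpa [Function.support] using this
  set A : ℝ := ∫ x, v x with hA
  -- the bump function
  obtain ⟨R, hR⟩ := hv_supp.isCompact.isBounded.subset_closedBall (0 : EuclideanSpace ℝ (Fin d))
  let f : ContDiffBump (0 : EuclideanSpace ℝ (Fin d)) :=
    ⟨max R 1, max R 1 + 1, lt_of_lt_of_le one_pos (le_max_right R 1), lt_add_one _⟩
  have hψ1 : ∀ x ∈ tsupport v, f x = 1 := fun x hx =>
    f.one_of_mem_closedBall (Metric.closedBall_subset_closedBall (le_max_left R 1) (hR hx))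
  have hψ_cd : ContDiff ℝ ((⊤ : ℕ∞) : WithTop ℕ∞) f := f.contDiff
  have hψ_diff : Differentiable ℝ f := hψ_cd.differentiable (by simp)
  -- gradient of ψ
  have hgψ_cont : Continuous (fun x => gradient (f : EuclideanSpace ℝ (Fin d) → ℝ) x) := by
    have h1 : Continuous (fderiv ℝ (f : EuclideanSpace ℝ (Fin d) → ℝ)) :=
      hψ_cd.continuous_fderiv (by simp)
    exact (InnerProductSpace.toDual ℝ (EuclideanSpace ℝ (Fin d))).symm.continuous.comp h1
  have hgψ_supp : HasCompactSupport (fun x => gradient (f : EuclideanSpace ℝ (Fin d) → ℝ) x) := by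
    have h1 : HasCompactSupport (fderiv ℝ (f : EuclideanSpace ℝ (Fin d) → ℝ)) :=
      f.hasCompactSupport.fderiv (𝕜 := ℝ)
    exact h1.comp_left (g := (InnerProductSpace.toDual ℝ (EuclideanSpace ℝ (Fin d))).symm)
      (map_zero _)
  have hG_int : Integrable (fun x => ‖gradient (f : EuclideanSpace ℝ (Fin d) → ℝ) x‖ ^ 2) := by
    have h2 : HasCompactSupport (fun x => ‖gradient (f : EuclideanSpace ℝ (Fin d) → ℝ) x‖ ^ 2) :=
      hgψ_supp.comp_left (g := fun (y : EuclideanSpace ℝ (Fin d)) => ‖y‖ ^ 2) (by simp)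
    exact ((hgψ_cont.norm.pow 2)).integrable_of_hasCompactSupport h2
  set G : ℝ := ∫ x, ‖gradient (f : EuclideanSpace ℝ (Fin d) → ℝ) x‖ ^ 2 with hGdef
  have hG0 : 0 ≤ G := integral_nonneg fun x => by positivity
  -- choice of ε
  set ε : ℝ := A / (A + 2 * G + 1) with hεdef
  have hden : 0 < A + 2 * G + 1 := by linarith
  have hε0 : 0 < ε := div_pos hA0 hden
  have hεeq : ε * (A + 2 * G + 1) = A := div_mul_cancel₀ _ (ne_of_gt hden)
  -- the trial function
  set φ : EuclideanSpace ℝ (Fin d) → ℝ := fun x => ε * f x with hφdef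
  have hφ_diff : Differentiable ℝ φ := hψ_diff.const_mul ε
  have hgradφ : ∀ x, gradient φ x = ε • gradient (f : EuclideanSpace ℝ (Fin d) → ℝ) x := by
    intro x
    show (InnerProductSpace.toDual ℝ _).symm (fderiv ℝ φ x)
      = ε • (InnerProductSpace.toDual ℝ _).symm (fderiv ℝ (f : EuclideanSpace ℝ (Fin d) → ℝ) x)
    rw [hφdef]
    rw [fderiv_const_mul (hψ_diff x) ε, _root_.map_smul]
  have hφ_supp : HasCompactSupport φ :=
    f.hasCompactSupport.comp_left (g := fun y => ε * y) (by simp)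
  have hφ_tendsto : Tendsto φ (cocompact _) (nhds 0) := by
    have h1 : ∀ᶠ x in cocompact (EuclideanSpace ℝ (Fin d)), φ x = 0 := by
      rw [hasBasis_cocompact.eventually_iff]
      exact ⟨tsupport φ, hφ_supp, fun x hx => image_eq_zero_of_notMem_tsupport hx⟩
    exact Tendsto.congr' (by filter_upwards [h1] with x hx using hx.symm) tendsto_const_nhds
  have hnormgrad : (fun x => ‖gradient φ x‖ ^ 2)
      = fun x => ε ^ 2 * ‖gradient (f : EuclideanSpace ℝ (Fin d) → ℝ) x‖ ^ 2 := by
    funext x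
    rw [hgradφ x, norm_smul]
    rw [mul_pow, Real.norm_eq_abs, sq_abs]
  have hφ_intgrad : Integrable (fun x => ‖gradient φ x‖ ^ 2) := by
    rw [hnormgrad]; exact hG_int.const_mul _
  -- energy computation
  have henergy : scatteringEnergy d v φ = 2 * ε ^ 2 * G + (1 - ε) ^ 2 * A := by
    have hpt : ∀ x, 2 * ‖gradient φ x‖ ^ 2 + v x * (1 - φ x) ^ 2
        = 2 * ε ^ 2 * (‖gradient (f : EuclideanSpace ℝ (Fin d) → ℝ) x‖ ^ 2)
          + (1 - ε) ^ 2 * v x := by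
      intro x
      have h1 : ‖gradient φ x‖ ^ 2 = ε ^ 2 * ‖gradient (f : EuclideanSpace ℝ (Fin d) → ℝ) x‖ ^ 2 :=
        congrFun hnormgrad x
      have h2 : v x * (1 - φ x) ^ 2 = (1 - ε) ^ 2 * v x := by
        by_cases hvx : v x = 0
        · rw [hvx]; ring
        · have hx : x ∈ tsupport v := subset_tsupport v hvx
          rw [hφdef]
          simp only [hψ1 x hx, mul_one]
          ring
      rw [h1, h2]; ring
    unfold scatteringEnergy
    rw [show (fun x => 2 * ‖gradient φ x‖ ^ 2 + v x * (1 - φ x) ^ 2)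
        = (fun x => 2 * ε ^ 2 * (‖gradient (f : EuclideanSpace ℝ (Fin d) → ℝ) x‖ ^ 2)
          + (1 - ε) ^ 2 * v x) from funext hpt]
    rw [integral_add (hG_int.const_mul _) (hv_int.const_mul _), integral_const_mul,
      integral_const_mul]
  -- the energy is strictly below A
  have hlt : scatteringEnergy d v φ < A := by
    rw [henergy]
    nlinarith [hε0, hG0, hA0, hεeq, mul_pos hε0 (by linarith : (0:ℝ) < A + ε)]
  -- conclude
  have hmem : scatteringEnergy d v φ ∈ { e : ℝ | ∃ φ : EuclideanSpace ℝ (Fin d) → ℝ,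
      Differentiable ℝ φ ∧ Tendsto φ (cocompact _) (nhds 0) ∧
      Integrable (fun x => ‖gradient φ x‖ ^ 2) ∧ e = scatteringEnergy d v φ } :=
    ⟨φ, hφ_diff, hφ_tendsto, hφ_intgrad, rfl⟩
  have hbdd : BddBelow { e : ℝ | ∃ φ : EuclideanSpace ℝ (Fin d) → ℝ,
      Differentiable ℝ φ ∧ Tendsto φ (cocompact _) (nhds 0) ∧
      Integrable (fun x => ‖gradient φ x‖ ^ 2) ∧ e = scatteringEnergy d v φ } := by
    refine ⟨0, fun e he => ?_⟩
    obtain ⟨ψ', -, -, -, rfl⟩ := he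
    exact integral_nonneg fun x => by have := hv_nonneg x; positivity
  calc scatteringB d v ≤ scatteringEnergy d v φ := csInf_le hbdd hmem
    _ < A := hlt
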